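/- For all Boolean functions f on n bits, g on m bits, and p ∈ [0,1], with g(p) = P_{x∼π_p}[g(x)=1], the distributional subcube partition complexity is submultiplicative under composition: sc(f∘g, π_p) ≤ sc(f, π_{g(p)}) · sc(g, π_p). -/

import Mathlib

open Classical

noncomputable section

/-- Flip the bits of `x` in the set `B`. -/
def flipOn {ι : Type*} [DecidableEq ι] (x : ι → Bool) (B : Finset ι) : ι → Bool :=
  fun i => if i ∈ B then !(x i) else x i

/-- Pointwise sensitivity of `f` at `x`. -/
def sensAt {ι : Type*} [Fintype ι] [DecidableEq ι] (f : (ι → Bool) → Bool)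
    (x : ι → Bool) : ℕ :=
  (Finset.univ.filter fun i => f (flipOn x {i}) ≠ f x).card

/-- Pointwise block sensitivity of `f` at `x`. -/
def bsAt {ι : Type*} [DecidableEq ι] (f : (ι → Bool) → Bool) (x : ι → Bool) : ℕ :=
  sSup {m | ∃ B : Fin m → Finset ι,
    (∀ j, f (flipOn x (B j)) ≠ f x) ∧ ∀ j k, j ≠ k → Disjoint (B j) (B k)}

/-- `W` is a witness set for `f` at `x`. -/
def IsWitness {ι : Type*} (f : (ι → Bool) → Bool) (x : ι → Bool) (W : Finset ι) : Prop :=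
  ∀ y, (∀ i ∈ W, y i = x i) → f y = f x

/-- Pointwise minimum witness size of `f` at `x`. -/
def witAt {ι : Type*} (f : (ι → Bool) → Bool) (x : ι → Bool) : ℕ :=
  sInf {k | ∃ W : Finset ι, W.card = k ∧ IsWitness f x W}

/-- Decision trees querying coordinates in `ι`. -/
inductive DTree (ι : Type*) where
  | leaf : DTree ι
  | node : ι → DTree ι → DTree ι → DTree ι

/-- The set of coordinates queried by the tree `T` on input `x`. -/
def DTree.path {ι : Type*} [DecidableEq ι] : DTree ι → (ι → Bool) → Finset ι
  | .leaf, _ => ∅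
  | .node i t0 t1, x => insert i (if x i then t1.path x else t0.path x)

/-- The tree `T` determines `f`: at each leaf the queried bits witness the value of `f`. -/
def DTree.Determines {ι : Type*} [DecidableEq ι] (T : DTree ι)
    (f : (ι → Bool) → Bool) : Prop :=
  ∀ x, IsWitness f x (T.path x)

/-- A partition of the hypercube into subcubes, encoded by the map sending each point to
the code (fixed coordinates) of its part. -/
structure SubcubePartition (ι : Type*) where
  code : (ι → Bool) → (ι → Option Bool)
  self_mem : ∀ x i b, code x i = some b → x i = b
  compat : ∀ x y, (∀ i b, code x i = some b → y i = b) → code y = code x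

/-- Number of coordinates fixed by the subcube containing `x`. -/
def SubcubePartition.codim {ι : Type*} [Fintype ι] (P : SubcubePartition ι)
    (x : ι → Bool) : ℕ :=
  (Finset.univ.filter fun i => (P.code x i).isSome).card

/-- The partition determines `f`, i.e. `f` is constant on each part. -/
def SubcubePartition.Determines {ι : Type*} (P : SubcubePartition ι)
    (f : (ι → Bool) → Bool) : Prop :=
  ∀ x y, (∀ i b, P.code x i = some b → y i = b) → f y = f x

/-- Deterministic sensitivity. -/
def detSens {ι : Type*} [Fintype ι] [DecidableEq ι] (f : (ι → Bool) → Bool) : ℕ :=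
  Finset.univ.sup fun x => sensAt f x

/-- Deterministic block sensitivity. -/
def detBS {ι : Type*} [Fintype ι] [DecidableEq ι] (f : (ι → Bool) → Bool) : ℕ :=
  Finset.univ.sup fun x => bsAt f x

/-- Deterministic witness complexity. -/
def detWit {ι : Type*} [Fintype ι] [DecidableEq ι] (f : (ι → Bool) → Bool) : ℕ :=
  Finset.univ.sup fun x => witAt f x

/-- Deterministic subcube partition complexity. -/
def detSC {ι : Type*} [Fintype ι] (f : (ι → Bool) → Bool) : ℕ :=
  sInf {k | ∃ P : SubcubePartition ι, P.Determines f ∧ ∀ x, P.codim x ≤ k}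

/-- Deterministic algorithmic (decision tree) complexity. -/
def detAlg {ι : Type*} [Fintype ι] [DecidableEq ι] (f : (ι → Bool) → Bool) : ℕ :=
  sInf {k | ∃ T : DTree ι, T.Determines f ∧ ∀ x, (T.path x).card ≤ k}

/-- Weight of the configuration `x` under the product Bernoulli(p) measure `π_p`. -/
def wt {ι : Type*} [Fintype ι] (p : ℝ) (x : ι → Bool) : ℝ :=
  ∏ i, (if x i then p else 1 - p)

/-- Expectation under `π_p`. -/
def expec {ι : Type*} [Fintype ι] [DecidableEq ι] (p : ℝ) (g : (ι → Bool) → ℝ) : ℝ :=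
  ∑ x, wt p x * g x

/-- Distributional sensitivity. -/
def distSens {ι : Type*} [Fintype ι] [DecidableEq ι] (f : (ι → Bool) → Bool) (p : ℝ) : ℝ :=
  expec p fun x => (sensAt f x : ℝ)

/-- Distributional block sensitivity. -/
def distBS {ι : Type*} [Fintype ι] [DecidableEq ι] (f : (ι → Bool) → Bool) (p : ℝ) : ℝ :=
  expec p fun x => (bsAt f x : ℝ)

/-- Distributional witness complexity. -/
def distWit {ι : Type*} [Fintype ι] [DecidableEq ι] (f : (ι → Bool) → Bool) (p : ℝ) : ℝ :=
  expec p fun x => (witAt f x : ℝ)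

/-- Distributional subcube partition complexity. -/
def distSC {ι : Type*} [Fintype ι] [DecidableEq ι] (f : (ι → Bool) → Bool) (p : ℝ) : ℝ :=
  sInf {c | ∃ P : SubcubePartition ι, P.Determines f ∧
    c = expec p fun x => (P.codim x : ℝ)}

/-- Distributional algorithmic complexity. -/
def distAlg {ι : Type*} [Fintype ι] [DecidableEq ι] (f : (ι → Bool) → Bool) (p : ℝ) : ℝ :=
  sInf {c | ∃ T : DTree ι, T.Determines f ∧
    c = expec p fun x => ((T.path x).card : ℝ)}

/-- `μ x J` is the joint probability that the bits equal `x` and the random set equals `J`;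
the conditions say: the marginal of the bits is `π_p`, the random set is a.s. a witness set
for `f`, and the random set is local (conditionally on `{I = J}` and the bits on `J`, the
bits outside `J` are still i.i.d. Bernoulli(p)). -/
def IsLocalWitnessSystem {ι : Type*} [Fintype ι] [DecidableEq ι]
    (f : (ι → Bool) → Bool) (p : ℝ) (μ : (ι → Bool) → Finset ι → ℝ) : Prop :=
  (∀ x J, 0 ≤ μ x J) ∧
  (∀ x, ∑ J, μ x J = wt p x) ∧
  (∀ x J, μ x J ≠ 0 → IsWitness f x J) ∧
  (∀ (J : Finset ι) x y, (∀ i ∈ J, x i = y i) → μ x J * wt p y = μ y J * wt p x)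

/-- Distributional local witness complexity. -/
def distLocal {ι : Type*} [Fintype ι] [DecidableEq ι]
    (f : (ι → Bool) → Bool) (p : ℝ) : ℝ :=
  sInf {c | ∃ μ : (ι → Bool) → Finset ι → ℝ, IsLocalWitnessSystem f p μ ∧
    c = ∑ x, ∑ J, μ x J * (J.card : ℝ)}

/-- The composition `f ∘ g` of Boolean functions, on `n · m` bits. -/
def bcomp {n m : ℕ} (f : (Fin n → Bool) → Bool) (g : (Fin m → Bool) → Bool) :
    (Fin n × Fin m → Bool) → Bool :=
  fun x => f fun i => g fun j => x (i, j)

/-- `P_{x ∼ π_p}[g(x) = 1]`. -/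
def probOne {ι : Type*} [Fintype ι] [DecidableEq ι] (g : (ι → Bool) → Bool) (p : ℝ) : ℝ :=
  ∑ x, wt p x * (if g x then 1 else 0)

namespace SCAux

open Finset

variable {ι : Type*} [Fintype ι] [DecidableEq ι]

lemma wt_nonneg {p : ℝ} (hp0 : 0 ≤ p) (hp1 : p ≤ 1) (x : ι → Bool) : 0 ≤ wt p x := by
  apply Finset.prod_nonneg
  intro i _
  cases x i <;> simp [hp0] <;> linarith

lemma sum_wt (p : ℝ) : ∑ x : ι → Bool, wt p x = 1 := by
  unfold wt
  rw [← Fintype.prod_sum (fun (_ : ι) (b : Bool) => if b then p else 1 - p)]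
  simp

lemma push_split {κ V : Type*} [Fintype κ] [DecidableEq κ] [Fintype V] [DecidableEq V]
    (w : V → ℝ) (g : V → Bool) (i : κ) (Φ : (κ → Bool) → V → ℝ) :
    ∑ z : κ → V, (∏ j, w (z j)) * Φ (fun j => g (z j)) (z i)
      = ∑ u : κ → Bool, (∑ v, (w v * if g v = u i then 1 else 0) * Φ u v) *
          ∏ j ∈ Finset.univ.erase i, (∑ v, w v * if g v = u j then 1 else 0) := by
  classical
  set G : (κ → Bool) → V → κ → V → ℝ := fun u v j x =>
    (w x * (if g x = u j then 1 else 0)) * (if j = i then (if x = v then 1 else 0) else 1)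
    with hG
  have h1 : ∀ (u : κ → Bool) (v : V) (z : κ → V), (∏ j, G u v j (z j))
      = (if (∀ j, g (z j) = u j) ∧ z i = v then (∏ j, w (z j)) else 0) := by
    intro u v z
    simp only [hG]
    rw [Finset.prod_mul_distrib, Finset.prod_mul_distrib, Finset.prod_boole,
      Finset.prod_ite_eq' Finset.univ i (fun j => if z j = v then (1:ℝ) else 0)]
    simp only [Finset.mem_univ, if_true]
    by_cases h2 : ∀ j, g (z j) = u j <;> by_cases h3 : z i = v <;>
      simp [h2, h3]
  have key : ∀ z : κ → V, (∏ j, w (z j)) * Φ (fun j => g (z j)) (z i)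
      = ∑ u : κ → Bool, ∑ v : V, (∏ j, G u v j (z j)) * Φ u v := by
    intro z
    have hu : ∀ u : κ → Bool, ∑ v : V, (∏ j, G u v j (z j)) * Φ u v
        = if u = (fun j => g (z j)) then (∏ j, w (z j)) * Φ u (z i) else 0 := by
      intro u
      by_cases h2 : u = (fun j => g (z j))
      · rw [if_pos h2]
        have hv : ∀ v, (∏ j, G u v j (z j)) * Φ u v
            = if z i = v then (∏ j, w (z j)) * Φ u v else 0 := by
          intro v
          rw [h1]
          have : ∀ j, g (z j) = u j := fun j => by rw [h2]
          by_cases h3 : z i = v <;> simp [h3, this]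
        rw [Finset.sum_congr rfl (fun v _ => hv v), Finset.sum_ite_eq]
        simp
      · rw [if_neg h2]
        apply Finset.sum_eq_zero
        intro v _
        rw [h1, if_neg, zero_mul]
        rintro ⟨ha, -⟩
        exact h2 (funext fun j => (ha j).symm)
    rw [Finset.sum_congr rfl (fun u _ => hu u), Finset.sum_ite_eq']
    simp
  rw [Finset.sum_congr rfl (fun z _ => key z)]
  rw [Finset.sum_comm]
  rw [Finset.sum_congr rfl (fun u _ => Finset.sum_comm)]
  have hz : ∀ u : κ → Bool, ∀ v : V, ∑ z : κ → V, (∏ j, G u v j (z j)) * Φ u v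
      = ((w v * if g v = u i then 1 else 0) *
          ∏ j ∈ Finset.univ.erase i, (∑ v', w v' * if g v' = u j then 1 else 0)) * Φ u v := by
    intro u v
    rw [← Finset.sum_mul]
    congr 1
    rw [← Fintype.prod_sum (fun j x => G u v j x)]
    rw [← Finset.mul_prod_erase Finset.univ _ (Finset.mem_univ i)]
    congr 1
    · -- ∑ x, G u v i x = w v * ite
      have : ∀ x, G u v i x = if x = v then w x * (if g x = u i then 1 else 0) else 0 := by
        intro x
        simp only [hG, if_pos rfl]
        by_cases h : x = v <;> simp [h]
      rw [Finset.sum_congr rfl (fun x _ => this x), Finset.sum_ite_eq']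
      simp
    · apply Finset.prod_congr rfl
      intro j hj
      have hji : j ≠ i := (Finset.mem_erase.mp hj).1
      apply Finset.sum_congr rfl
      intro x _
      simp only [hG, if_neg hji, mul_one]
  calc ∑ u : κ → Bool, ∑ v : V, ∑ z : κ → V, (∏ j, G u v j (z j)) * Φ u v
      = ∑ u : κ → Bool, ∑ v : V, ((w v * if g v = u i then 1 else 0) *
          ∏ j ∈ Finset.univ.erase i, (∑ v', w v' * if g v' = u j then 1 else 0)) * Φ u v := by
        exact Finset.sum_congr rfl fun u _ => Finset.sum_congr rfl fun v _ => hz u v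
    _ = _ := by
        apply Finset.sum_congr rfl
        intro u _
        rw [Finset.sum_mul]
        apply Finset.sum_congr rfl
        intro v _
        ring

lemma flip_invol (i : ι) :
    Function.Involutive (fun x : ι → Bool => Function.update x i (!x i)) := by
  intro x
  funext j
  by_cases hj : j = i
  · subst hj; simp
  · simp [Function.update_of_ne hj]

lemma code_isSome_flip (P : SubcubePartition ι) (x : ι → Bool) (i : ι)
    (h : (P.code x i).isSome) : (P.code (Function.update x i (!x i)) i).isSome := by
  by_contra hn
  have hagree : ∀ j b, P.code (Function.update x i (!x i)) j = some b → x j = b := by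
    intro j b hj
    by_cases hji : j = i
    · subst hji; rw [hj] at hn; simp at hn
    · have h2 := P.self_mem _ j b hj
      rwa [Function.update_of_ne hji] at h2
  have hcode := P.compat _ x hagree
  rw [hcode] at h
  exact hn h

lemma code_flip_eq (P : SubcubePartition ι) (x : ι → Bool) (i : ι) (b : Bool)
    (h : P.code x i = some b) :
    P.code (Function.update x i (!x i)) i = some (!b) := by
  have h1 : (P.code (Function.update x i (!x i)) i).isSome :=
    code_isSome_flip P x i (by rw [h]; rfl)
  obtain ⟨b', hb'⟩ := Option.isSome_iff_exists.mp h1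
  have h2 := P.self_mem _ i b' hb'
  rw [Function.update_self] at h2
  have hx := P.self_mem x i b h
  rw [hb', ← h2, hx]

lemma code_flip_none (P : SubcubePartition ι) (x : ι → Bool) (i : ι)
    (h : P.code x i = none) :
    P.code (Function.update x i (!x i)) i = none := by
  by_contra h3
  have h4 := code_isSome_flip P (Function.update x i (!x i)) i
    (Option.ne_none_iff_isSome.mp h3)
  rw [show Function.update (Function.update x i (!x i)) i
      (!(Function.update x i (!x i)) i) = x from flip_invol i x] at h4
  rw [h] at h4
  simp at h4

lemma wt_erase (q : ℝ) (x : ι → Bool) (i : ι) :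
    wt q x = (if x i then q else 1 - q) *
      ∏ j ∈ Finset.univ.erase i, (if x j then q else 1 - q) :=
  (Finset.mul_prod_erase Finset.univ _ (Finset.mem_univ i)).symm

lemma wt_update (q : ℝ) (x : ι → Bool) (i : ι) (c : Bool) :
    wt q (Function.update x i c)
      = (if c then q else 1 - q) * ∏ j ∈ Finset.univ.erase i, (if x j then q else 1 - q) := by
  rw [wt_erase q _ i, Function.update_self]
  congr 1
  exact Finset.prod_congr rfl fun j hj => by
    rw [Function.update_of_ne (Finset.mem_erase.mp hj).1]

lemma sum_code_some (P : SubcubePartition ι) (q : ℝ) (i : ι) (b : Bool) :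
    ∑ y : ι → Bool, wt q y * (if P.code y i = some b then 1 else 0)
      = (if b then q else 1 - q) *
        ∑ y : ι → Bool, wt q y * (if (P.code y i).isSome then 1 else 0) := by
  have hsplit : ∑ y : ι → Bool, wt q y * (if (P.code y i).isSome then 1 else 0)
      = (∑ y : ι → Bool, wt q y * (if P.code y i = some true then 1 else 0))
        + ∑ y : ι → Bool, wt q y * (if P.code y i = some false then 1 else 0) := by
    rw [← Finset.sum_add_distrib]
    apply Finset.sum_congr rfl
    intro y _
    rw [← mul_add]
    congr 1
    rcases hy : P.code y i with _ | b'
    · simp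
    · cases b' <;> simp
  have key : (1 - q) * (∑ y : ι → Bool, wt q y * (if P.code y i = some true then 1 else 0))
      = q * ∑ y : ι → Bool, wt q y * (if P.code y i = some false then 1 else 0) := by
    rw [Finset.mul_sum, Finset.mul_sum,
      ← Equiv.sum_comp ((flip_invol (ι := ι) i).toPerm)
        (fun y => q * (wt q y * (if P.code y i = some false then 1 else 0)))]
    apply Finset.sum_congr rfl
    intro y _
    have hfy : ((flip_invol (ι := ι) i).toPerm) y = Function.update y i (!y i) := rfl
    rw [hfy]
    rcases hy : P.code y i with _ | b'
    · rw [code_flip_none P y i hy]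
      simp
    · cases b'
      · rw [code_flip_eq P y i false hy]
        simp
      · rw [code_flip_eq P y i true hy]
        have hyi := P.self_mem y i true hy
        rw [wt_update q y i, wt_erase q y i, hyi]
        norm_num
        ring
  rw [hsplit]
  cases b
  · simp only [Bool.false_eq_true, if_false]
    have h2 : ∑ y : ι → Bool, wt q y * (if P.code y i = some false then 1 else 0)
        = (1 - q) * ((∑ y : ι → Bool, wt q y * (if P.code y i = some true then 1 else 0))
          + ∑ y : ι → Bool, wt q y * (if P.code y i = some false then 1 else 0)) := by
      linarith
    exact h2
  · simp only [if_true]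
    have h2 : ∑ y : ι → Bool, wt q y * (if P.code y i = some true then 1 else 0)
        = q * ((∑ y : ι → Bool, wt q y * (if P.code y i = some true then 1 else 0))
          + ∑ y : ι → Bool, wt q y * (if P.code y i = some false then 1 else 0)) := by
      linarith
    exact h2

lemma ite_isSome_split (o : Option Bool) (r : ℝ) :
    (if o.isSome then r else 0) = ∑ b : Bool, if o = some b then r else 0 := by
  rcases o with _ | b
  · simp
  · cases b <;> simp

variable {n m : ℕ}

/-- The composition of subcube partitions. -/
def compPart (g : (Fin m → Bool) → Bool) (P : SubcubePartition (Fin n))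
    (Q : SubcubePartition (Fin m)) (hQ : Q.Determines g) :
    SubcubePartition (Fin n × Fin m) where
  code x := fun ij =>
    if (P.code (fun i => g (fun j => x (i, j))) ij.1).isSome
    then Q.code (fun j => x (ij.1, j)) ij.2 else none
  self_mem := by
    intro x ij b h
    split at h
    · exact Q.self_mem _ ij.2 b h
    · simp at h
  compat := by
    intro x y hxy
    have hrow : ∀ i : Fin n, (P.code (fun i' => g (fun j => x (i', j))) i).isSome →
        Q.code (fun j => y (i, j)) = Q.code (fun j => x (i, j)) := by
      intro i hi
      apply Q.compat
      intro j b hj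
      exact hxy (i, j) b (by simp only [if_pos hi]; exact hj)
    have hg : ∀ i : Fin n, (P.code (fun i' => g (fun j => x (i', j))) i).isSome →
        g (fun j => y (i, j)) = g (fun j => x (i, j)) := by
      intro i hi
      apply hQ
      intro j b hj
      exact Q.self_mem (fun j => y (i, j)) j b (by rw [hrow i hi]; exact hj)
    have hP : P.code (fun i => g (fun j => y (i, j))) = P.code (fun i => g (fun j => x (i, j))) := by
      apply P.compat
      intro i b hb
      have hi : (P.code (fun i' => g (fun j => x (i', j))) i).isSome := by rw [hb]; rfl
      have := P.self_mem _ i b hb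
      rw [hg i hi]
      exact this
    funext ij
    simp only [hP]
    by_cases hi : (P.code (fun i' => g (fun j => x (i', j))) ij.1).isSome
    · rw [if_pos hi, if_pos hi, hrow ij.1 hi]
    · rw [if_neg hi, if_neg hi]

lemma compPart_determines (f : (Fin n → Bool) → Bool) (g : (Fin m → Bool) → Bool)
    (P : SubcubePartition (Fin n)) (Q : SubcubePartition (Fin m))
    (hP : P.Determines f) (hQ : Q.Determines g) :
    (compPart g P Q hQ).Determines (bcomp f g) := by
  intro x y hxy
  have hg : ∀ i : Fin n, (P.code (fun i' => g (fun j => x (i', j))) i).isSome →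
      g (fun j => y (i, j)) = g (fun j => x (i, j)) := by
    intro i hi
    apply hQ
    intro j b hj
    refine hxy (i, j) b ?_
    simp only [compPart, if_pos hi]
    exact hj
  apply hP
  intro i b hb
  have hi : (P.code (fun i' => g (fun j => x (i', j))) i).isSome := by rw [hb]; rfl
  have := P.self_mem _ i b hb
  rw [hg i hi]
  exact this

lemma compPart_codim (g : (Fin m → Bool) → Bool) (P : SubcubePartition (Fin n))
    (Q : SubcubePartition (Fin m)) (hQ : Q.Determines g) (x : Fin n × Fin m → Bool) :
    (((compPart g P Q hQ).codim x : ℝ))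
      = ∑ i : Fin n, (if (P.code (fun i' => g (fun j => x (i', j))) i).isSome
          then (Q.codim (fun j => x (i, j)) : ℝ) else 0) := by
  unfold SubcubePartition.codim
  rw [Finset.card_filter]
  push_cast
  rw [Fintype.sum_prod_type]
  apply Finset.sum_congr rfl
  intro i _
  by_cases hi : (P.code (fun i' => g (fun j => x (i', j))) i).isSome
  · rw [if_pos hi, Finset.card_filter]
    push_cast
    apply Finset.sum_congr rfl
    intro j _
    simp only [compPart, if_pos hi]
  · rw [if_neg hi]
    apply Finset.sum_eq_zero
    intro j _
    simp only [compPart, if_neg hi]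
    simp

def cB (g : (Fin m → Bool) → Bool) (p : ℝ) (b : Bool) : ℝ :=
  ∑ v : Fin m → Bool, wt p v * (if g v = b then 1 else 0)

def ccB (g : (Fin m → Bool) → Bool) (p : ℝ) (Q : SubcubePartition (Fin m)) (b : Bool) : ℝ :=
  ∑ v : Fin m → Bool, (wt p v * (if g v = b then 1 else 0)) * (Q.codim v : ℝ)

def DD (g : (Fin m → Bool) → Bool) (p : ℝ) (P : SubcubePartition (Fin n))
    (i : Fin n) (b : Bool) : ℝ :=
  ∑ u : Fin n → Bool, (if P.code u i = some b then 1 else 0) *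
    ∏ j ∈ Finset.univ.erase i, cB g p (u j)

lemma cB_qb (g : (Fin m → Bool) → Bool) (p : ℝ) (b : Bool) :
    cB g p b = if b then probOne g p else 1 - probOne g p := by
  have ht : cB g p true = probOne g p := by
    unfold cB probOne
    apply Finset.sum_congr rfl
    intro v _
    congr 1
  have hsum : cB g p true + cB g p false = 1 := by
    unfold cB
    conv_rhs => rw [← sum_wt (ι := Fin m) p]
    rw [← Finset.sum_add_distrib]
    apply Finset.sum_congr rfl
    intro v _
    cases hgv : g v <;> simp
  cases b
  · simp only [Bool.false_eq_true, if_false]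
    linarith
  · simpa using ht

lemma ccB_zero {p : ℝ} (hp0 : 0 ≤ p) (hp1 : p ≤ 1) (g : (Fin m → Bool) → Bool)
    (Q : SubcubePartition (Fin m)) (b : Bool) (h0 : cB g p b = 0) :
    ccB g p Q b = 0 := by
  have hnn : ∀ v ∈ Finset.univ, 0 ≤ wt p v * (if g v = b then (1:ℝ) else 0) := by
    intro v _
    apply mul_nonneg (wt_nonneg hp0 hp1 v)
    split <;> norm_num
  have hz := (Finset.sum_eq_zero_iff_of_nonneg hnn).mp h0
  apply Finset.sum_eq_zero
  intro v hv
  rw [hz v hv, zero_mul]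

lemma ccB_add (g : (Fin m → Bool) → Bool) (p : ℝ) (Q : SubcubePartition (Fin m)) :
    ccB g p Q true + ccB g p Q false = expec p fun v => (Q.codim v : ℝ) := by
  unfold ccB expec
  rw [← Finset.sum_add_distrib]
  apply Finset.sum_congr rfl
  intro v _
  cases h : g v <;> simp [h] <;> ring

lemma G_eq (g : (Fin m → Bool) → Bool) (p : ℝ) (P : SubcubePartition (Fin n))
    (i : Fin n) (b : Bool) :
    ∑ u : Fin n → Bool, wt (probOne g p) u * (if P.code u i = some b then 1 else 0)
      = cB g p b * DD g p P i b := by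
  unfold DD
  rw [Finset.mul_sum]
  apply Finset.sum_congr rfl
  intro u _
  by_cases hu : P.code u i = some b
  · have hui : u i = b := P.self_mem u i b hu
    rw [if_pos hu, wt_erase (probOne g p) u i, hui, ← cB_qb]
    have hcongr : ∀ j ∈ Finset.univ.erase i,
        (if u j then probOne g p else 1 - probOne g p) = cB g p (u j) := by
      intro j _
      rw [cB_qb]
    rw [Finset.prod_congr rfl hcongr]
    ring
  · rw [if_neg hu]
    ring

lemma sum_Fix (P : SubcubePartition (Fin n)) (q : ℝ) :
    ∑ i : Fin n, ∑ u : Fin n → Bool, wt q u * (if (P.code u i).isSome then 1 else 0)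
      = expec q fun u => (P.codim u : ℝ) := by
  rw [Finset.sum_comm]
  unfold expec
  apply Finset.sum_congr rfl
  intro u _
  rw [← Finset.mul_sum]
  congr 1
  show (∑ i : Fin n, if (P.code u i).isSome = true then (1:ℝ) else 0)
      = ((Finset.univ.filter fun i => (P.code u i).isSome).card : ℝ)
  rw [Finset.card_filter]
  push_cast
  rfl

lemma T_eq (g : (Fin m → Bool) → Bool) (p : ℝ) (P : SubcubePartition (Fin n))
    (Q : SubcubePartition (Fin m)) (i : Fin n) (b : Bool) :
    (∑ z : Fin n → Fin m → Bool, (∏ i', wt p (z i')) *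
        (if P.code (fun i' => g (z i')) i = some b then (Q.codim (z i) : ℝ) else 0))
      = ccB g p Q b * DD g p P i b := by
  have hΦ : ∀ z : Fin n → Fin m → Bool,
      (∏ i', wt p (z i')) *
        (if P.code (fun i' => g (z i')) i = some b then (Q.codim (z i) : ℝ) else 0)
      = (∏ i', wt p (z i')) *
        (fun (u : Fin n → Bool) (v : Fin m → Bool) =>
          (if P.code u i = some b then (1:ℝ) else 0) *
            ((if g v = b then 1 else 0) * (Q.codim v : ℝ)))
        (fun j => g (z j)) (z i) := by
    intro z
    simp only
    by_cases h : P.code (fun i' => g (z i')) i = some b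
    · have hgz : g (z i) = b := P.self_mem _ i b h
      rw [if_pos h, if_pos h, if_pos hgz]
      ring
    · rw [if_neg h, if_neg h]
      ring
  rw [Finset.sum_congr rfl fun z _ => hΦ z, push_split (wt p) g i
    (fun u v => (if P.code u i = some b then (1:ℝ) else 0) *
      ((if g v = b then 1 else 0) * (Q.codim v : ℝ)))]
  unfold DD cB
  rw [Finset.mul_sum]
  apply Finset.sum_congr rfl
  intro u _
  by_cases hu : P.code u i = some b
  · have hui : u i = b := P.self_mem u i b hu
    simp only [hu, ↓reduceIte, one_mul, hui]
    have hin : (∑ v : Fin m → Bool, (wt p v * if g v = b then 1 else 0) *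
        ((if g v = b then 1 else 0) * (Q.codim v : ℝ))) = ccB g p Q b := by
      unfold ccB
      apply Finset.sum_congr rfl
      intro v _
      by_cases hv : g v = b
      · rw [if_pos hv]
        ring
      · rw [if_neg hv]
        ring
    rw [hin]
  · simp [hu]

lemma expec_compPart (g : (Fin m → Bool) → Bool) {p : ℝ} (hp0 : 0 ≤ p) (hp1 : p ≤ 1)
    (P : SubcubePartition (Fin n)) (Q : SubcubePartition (Fin m)) (hQ : Q.Determines g) :
    expec p (fun x => ((compPart g P Q hQ).codim x : ℝ))
      = (expec p fun v => (Q.codim v : ℝ)) * (expec (probOne g p) fun u => (P.codim u : ℝ)) := by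
  have step1 : expec p (fun x => ((compPart g P Q hQ).codim x : ℝ))
      = ∑ z : Fin n → Fin m → Bool, (∏ i, wt p (z i)) *
          ∑ i, (if (P.code (fun i' => g (z i')) i).isSome then (Q.codim (z i) : ℝ) else 0) := by
    unfold expec
    rw [← Equiv.sum_comp (Equiv.curry (Fin n) (Fin m) Bool).symm
      (fun x => wt p x * ((compPart g P Q hQ).codim x : ℝ))]
    apply Finset.sum_congr rfl
    intro z _
    show wt p (fun ij : Fin n × Fin m => z ij.1 ij.2) *
        ((compPart g P Q hQ).codim (fun ij : Fin n × Fin m => z ij.1 ij.2) : ℝ) = _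
    congr 1
    · unfold wt
      rw [Fintype.prod_prod_type]
    · rw [compPart_codim]
  rw [step1]
  have hsplit2 : ∀ z : Fin n → Fin m → Bool, (∏ i, wt p (z i)) *
      ∑ i, (if (P.code (fun i' => g (z i')) i).isSome then (Q.codim (z i) : ℝ) else 0)
      = ∑ i, ∑ b : Bool, (∏ i', wt p (z i')) *
          (if P.code (fun i' => g (z i')) i = some b then (Q.codim (z i) : ℝ) else 0) := by
    intro z
    rw [Finset.mul_sum]
    apply Finset.sum_congr rfl
    intro i _
    rw [ite_isSome_split, Finset.mul_sum]
  rw [Finset.sum_congr rfl fun z _ => hsplit2 z]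
  rw [Finset.sum_comm]
  rw [Finset.sum_congr rfl fun i _ => Finset.sum_comm]
  have hmain : ∀ i : Fin n, ∑ b : Bool, ∑ z : Fin n → Fin m → Bool, (∏ i', wt p (z i')) *
      (if P.code (fun i' => g (z i')) i = some b then (Q.codim (z i) : ℝ) else 0)
      = (ccB g p Q true + ccB g p Q false) *
        ∑ u : Fin n → Bool, wt (probOne g p) u * (if (P.code u i).isSome then 1 else 0) := by
    intro i
    have hb : ∀ b : Bool, ∑ z : Fin n → Fin m → Bool, (∏ i', wt p (z i')) *
        (if P.code (fun i' => g (z i')) i = some b then (Q.codim (z i) : ℝ) else 0)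
        = ccB g p Q b *
          ∑ u : Fin n → Bool, wt (probOne g p) u * (if (P.code u i).isSome then 1 else 0) := by
      intro b
      rw [T_eq]
      by_cases h0 : cB g p b = 0
      · rw [ccB_zero hp0 hp1 g Q b h0]
        ring
      · have h1 := G_eq g p P i b
        have h2 := sum_code_some P (probOne g p) i b
        rw [← cB_qb] at h2
        have h3 : DD g p P i b
            = ∑ u : Fin n → Bool, wt (probOne g p) u * (if (P.code u i).isSome then 1 else 0) :=
          mul_left_cancel₀ h0 (h1.symm.trans h2)
        rw [h3]
    rw [Fintype.sum_bool, hb true, hb false]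
    ring
  rw [Finset.sum_congr rfl fun i _ => hmain i]
  rw [← Finset.mul_sum, sum_Fix, ccB_add]

def fullPart (ι : Type*) [Fintype ι] [DecidableEq ι] : SubcubePartition ι where
  code x i := some (x i)
  self_mem := fun x i b h => Option.some_inj.mp h
  compat := fun x y h => by
    have hyx : y = x := funext fun i => h i (x i) rfl
    rw [hyx]

lemma fullPart_determines (f : (ι → Bool) → Bool) : (fullPart ι).Determines f := by
  intro x y h
  have hyx : y = x := funext fun i => h i (x i) rfl
  rw [hyx]

lemma distSC_finite (f : (ι → Bool) → Bool) (p : ℝ) :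
    {c | ∃ P : SubcubePartition ι, P.Determines f ∧
      c = expec p fun x => (P.codim x : ℝ)}.Finite := by
  apply Set.Finite.subset (Set.finite_range (fun code : ((ι → Bool) → ι → Option Bool) =>
    expec p fun x => ((Finset.univ.filter fun i => (code x i).isSome).card : ℝ)))
  rintro c ⟨P, -, rfl⟩
  exact ⟨P.code, rfl⟩

lemma distSC_attained (f : (ι → Bool) → Bool) (p : ℝ) :
    ∃ P : SubcubePartition ι, P.Determines f ∧
      distSC f p = expec p fun x => (P.codim x : ℝ) := by
  have hne : {c | ∃ P : SubcubePartition ι, P.Determines f ∧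
      c = expec p fun x => (P.codim x : ℝ)}.Nonempty :=
    ⟨_, fullPart ι, fullPart_determines f, rfl⟩
  exact hne.csInf_mem (distSC_finite f p)

end SCAux


/-- distributional subcube partition complexity is submultiplicative
under composition: `sc(f∘g, π_p) ≤ sc(f, π_{g(p)}) · sc(g, π_p)`. -/
theorem distSC_comp (n m : ℕ) (f : (Fin n → Bool) → Bool) (g : (Fin m → Bool) → Bool)
    (p : ℝ) (hp0 : 0 ≤ p) (hp1 : p ≤ 1) :
    distSC (bcomp f g) p ≤ distSC f (probOne g p) * distSC g p := by
  obtain ⟨P, hPdet, hP⟩ := SCAux.distSC_attained f (probOne g p)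
  obtain ⟨Q, hQdet, hQ⟩ := SCAux.distSC_attained g p
  have hle : distSC (bcomp f g) p
      ≤ expec p fun x => ((SCAux.compPart g P Q hQdet).codim x : ℝ) := by
    apply csInf_le (SCAux.distSC_finite (bcomp f g) p).bddBelow
    exact ⟨_, SCAux.compPart_determines f g P Q hPdet hQdet, rfl⟩
  rw [SCAux.expec_compPart g hp0 hp1 P Q hQdet] at hle
  rw [hP, hQ]
  calc distSC (bcomp f g) p ≤ _ := hle
    _ = (expec (probOne g p) fun u => (P.codim u : ℝ)) * expec p fun v => (Q.codim v : ℝ) :=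
      mul_comm _ _
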